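/- Let k : [0,1] → ℝ be continuous with k > 0 on (0,1], k(0) = 0, and suppose x·k'(x) ≤ M·k(x) on (0,1] with M ∈ (0,2). Then there exists C > 0 such that for every u ∈ H⁰¹(0,1) (i.e. u ∈ H¹(0,1) with u(0) = u(1) = 0), one has ∫₀¹ u(x)²/k(x) dx ≤ C ∫₀¹ u'(x)² dx. -/

import Mathlib

open Set MeasureTheory intervalIntegral


lemma cs_helper {s : Set ℝ} (hfin : volume s ≠ ⊤) (f : ℝ → ℝ)
    (hf : IntegrableOn f s) (hf2 : IntegrableOn (fun t => f t ^ 2) s) :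
    (∫ t in s, f t) ^ 2 ≤ (volume s).toReal * ∫ t in s, f t ^ 2 := by
  have hm0 : 0 ≤ (volume s).toReal := ENNReal.toReal_nonneg
  have h1 : IntegrableOn (fun t => (volume s).toReal ^ 2 * f t ^ 2) s := hf2.const_mul _
  have h2 : IntegrableOn (fun t => 2 * (volume s).toReal * (∫ t in s, f t) * f t) s :=
    hf.const_mul _
  have h3 : IntegrableOn (fun _ : ℝ => (∫ t in s, f t) ^ 2) s :=
    integrableOn_const hfin
  have h0 : (0:ℝ) ≤ ∫ t in s, ((volume s).toReal * f t - (∫ t in s, f t)) ^ 2 :=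
    integral_nonneg (fun t => sq_nonneg _)
  have hfun : (fun t => ((volume s).toReal * f t - (∫ t in s, f t)) ^ 2)
      = fun t => ((volume s).toReal ^ 2 * f t ^ 2
          - 2 * (volume s).toReal * (∫ t in s, f t) * f t) + (∫ t in s, f t) ^ 2 := by
    funext t; ring
  have h12 : IntegrableOn (fun t => (volume s).toReal ^ 2 * f t ^ 2
      - 2 * (volume s).toReal * (∫ t in s, f t) * f t) s := h1.sub h2
  rw [hfun, integral_add h12 h3, integral_sub h1 h2,
    MeasureTheory.integral_const_mul, MeasureTheory.integral_const_mul, setIntegral_const, measureReal_def, smul_eq_mul] at h0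
  rcases eq_or_lt_of_le hm0 with h | h
  · have hs0 : volume s = 0 := by
      rcases (ENNReal.toReal_eq_zero_iff (volume s)).1 h.symm with h' | h'
      · exact h'
      · exact absurd h' hfin
    have hA : (∫ t in s, f t) = 0 := by
      rw [Measure.restrict_eq_zero.2 hs0, integral_zero_measure]
    simp [hA, ← h]
  · nlinarith [h0, sq_nonneg (∫ t in s, f t)]


lemma klow (k k' : ℝ → ℝ) (M : ℝ) (hM : M ∈ Set.Ioo (0:ℝ) 2)
    (hcont : ContinuousOn k (Set.Icc 0 1))
    (hder : ∀ x ∈ Set.Ioc (0:ℝ) 1, HasDerivAt k (k' x) x)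
    (hineq : ∀ x ∈ Set.Ioc (0:ℝ) 1, x * k' x ≤ M * k x) :
    ∀ x ∈ Set.Ioc (0:ℝ) 1, k 1 * x ^ M ≤ k x := by
  intro x hx
  set g : ℝ → ℝ := fun y => k y * y ^ (-M) with hg
  have hanti : AntitoneOn g (Icc x 1) := by
    apply antitoneOn_of_deriv_nonpos (convex_Icc x 1)
    · apply ContinuousOn.mul (hcont.mono ?_)
      · intro y hy
        exact (Real.continuousAt_rpow_const y (-M) (Or.inl (by linarith [hx.1, hy.1]))).continuousWithinAt
      · intro y hy; exact ⟨by linarith [hx.1, hy.1], hy.2⟩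
    · intro y hy
      rw [interior_Icc] at hy
      have hy0 : 0 < y := lt_trans hx.1 hy.1
      have : HasDerivAt g (k' y * y ^ (-M) + k y * (-M * y ^ (-M - 1))) y :=
        ((hder y ⟨hy0, le_of_lt hy.2⟩).mul (Real.hasDerivAt_rpow_const (Or.inl hy0.ne')))
      exact this.differentiableAt.differentiableWithinAt
    · intro y hy
      rw [interior_Icc] at hy
      have hy0 : 0 < y := lt_trans hx.1 hy.1
      have hyIoc : y ∈ Set.Ioc (0:ℝ) 1 := ⟨hy0, le_of_lt hy.2⟩
      have hd : HasDerivAt g (k' y * y ^ (-M) + k y * (-M * y ^ (-M - 1))) y :=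
        ((hder y hyIoc).mul (Real.hasDerivAt_rpow_const (Or.inl hy0.ne')))
      rw [hd.deriv]
      have hsplit : y ^ (-M) = y * y ^ (-M - 1) := by
        have h' : y * y ^ (-M - 1) = y ^ (1 + (-M - 1)) := by
          rw [Real.rpow_add hy0, Real.rpow_one]
        rw [h']; congr 1; ring
      have hkey : k' y * y ^ (-M) + k y * (-M * y ^ (-M - 1))
          = y ^ (-M - 1) * (y * k' y - M * k y) := by
        rw [hsplit]; ring
      rw [hkey]
      exact mul_nonpos_of_nonneg_of_nonpos (Real.rpow_nonneg hy0.le _)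
        (by linarith [hineq y hyIoc])
  have h1 : g 1 ≤ g x := hanti (left_mem_Icc.2 hx.2) (right_mem_Icc.2 hx.2) hx.2
  have hg1 : g 1 = k 1 := by simp [hg, Real.one_rpow]
  have hxM : (0:ℝ) < x ^ M := Real.rpow_pos_of_pos hx.1 _
  have hcancel : x ^ (-M) * x ^ M = 1 := by
    rw [← Real.rpow_add hx.1]; simp
  calc k 1 * x ^ M = g 1 * x ^ M := by rw [hg1]
    _ ≤ g x * x ^ M := by apply mul_le_mul_of_nonneg_right h1 hxM.le
    _ = k x * (x ^ (-M) * x ^ M) := by rw [hg]; ring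
    _ = k x := by rw [hcancel, mul_one]

/-- Hardy–Poincaré inequality: ∫₀¹ u²/k ≤ C ∫₀¹ (u')² for u vanishing at 0 and 1,
when k is degenerate at 0 with exponent M < 2. -/
theorem stmt_8 (k k' : ℝ → ℝ) (M : ℝ) (hM : M ∈ Set.Ioo (0:ℝ) 2)
    (hcont : ContinuousOn k (Set.Icc 0 1))
    (hpos : ∀ x ∈ Set.Ioc (0:ℝ) 1, 0 < k x)
    (hk0 : k 0 = 0)
    (hder : ∀ x ∈ Set.Ioc (0:ℝ) 1, HasDerivAt k (k' x) x)
    (hineq : ∀ x ∈ Set.Ioc (0:ℝ) 1, x * k' x ≤ M * k x) :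
    ∃ C > 0, ∀ u u' : ℝ → ℝ,
      (∀ x ∈ Set.Icc (0:ℝ) 1, HasDerivAt u (u' x) x) →
      u 0 = 0 → u 1 = 0 →
      MeasureTheory.IntegrableOn (fun x => u' x ^ 2) (Set.Icc 0 1)
        MeasureTheory.volume →
      (∫ x in (0:ℝ)..1, u x ^ 2 / k x) ≤ C * ∫ x in (0:ℝ)..1, u' x ^ 2 := by
  obtain ⟨hM0, hM2⟩ := hM
  have hc : 0 < k 1 := hpos 1 ⟨one_pos, le_refl 1⟩
  set c := k 1 with hcdef
  have h2M : 0 < 2 - M := by linarith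
  refine ⟨1 / (c * (2 - M)), by positivity, ?_⟩
  intro u u' hu hu0 hu1 hint
  set I := ∫ x in (0:ℝ)..1, u' x ^ 2 with hIdef
  -- measurability of u'
  have hmeas : AEStronglyMeasurable u' (volume.restrict (Icc (0:ℝ) 1)) := by
    have hae : ∀ᵐ x ∂(volume.restrict (Icc (0:ℝ) 1)), deriv u x = u' x :=
      ae_restrict_of_forall_mem measurableSet_Icc (fun x hx => (hu x hx).deriv)
    exact ((measurable_deriv u).aestronglyMeasurable.restrict).congr hae
  -- integrability of u'
  have hu'int : IntegrableOn u' (Icc (0:ℝ) 1) := by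
    have hg : IntegrableOn (fun x => (1/2 : ℝ) * (u' x ^ 2 + 1)) (Icc (0:ℝ) 1) :=
      (hint.add (integrableOn_const (by simp))).const_mul _
    refine hg.mono' hmeas ?_
    filter_upwards with x
    have : (|u' x| - 1)^2 ≥ 0 := sq_nonneg _
    have h2 : |u' x|^2 = u' x ^ 2 := sq_abs _
    simp only [Real.norm_eq_abs]
    nlinarith
  have hI0 : 0 ≤ I := intervalIntegral.integral_nonneg zero_le_one (fun x _ => sq_nonneg _)
  -- I as set integral
  have hIeq : I = ∫ t in Ioc (0:ℝ) 1, u' t ^ 2 := intervalIntegral.integral_of_le zero_le_one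
  -- pointwise bound u x ^ 2 ≤ x * I
  have hptsq : ∀ x ∈ Icc (0:ℝ) 1, u x ^ 2 ≤ x * I := by
    intro x hx
    have hsub : Icc (0:ℝ) x ⊆ Icc (0:ℝ) 1 := Icc_subset_Icc le_rfl hx.2
    have hint' : IntervalIntegrable u' volume 0 x := by
      rw [intervalIntegrable_iff_integrableOn_Icc_of_le hx.1]
      exact hu'int.mono_set hsub
    have hftc : ∫ t in (0:ℝ)..x, u' t = u x - u 0 :=
      intervalIntegral.integral_eq_sub_of_hasDerivAt
        (fun t ht => hu t (by rw [uIcc_of_le hx.1] at ht; exact hsub ht)) hint'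
    have hux : u x = ∫ t in Ioc (0:ℝ) x, u' t := by
      rw [← intervalIntegral.integral_of_le hx.1, hftc, hu0, sub_zero]
    have hfin : volume (Ioc (0:ℝ) x) ≠ ⊤ := by
      rw [Real.volume_Ioc]; exact ENNReal.ofReal_ne_top
    have h1 : IntegrableOn u' (Ioc (0:ℝ) x) :=
      hu'int.mono_set ((Ioc_subset_Icc_self).trans hsub)
    have h2 : IntegrableOn (fun t => u' t ^ 2) (Ioc (0:ℝ) x) :=
      hint.mono_set ((Ioc_subset_Icc_self).trans hsub)
    have hcs := cs_helper hfin u' h1 h2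
    have hvol : (volume (Ioc (0:ℝ) x)).toReal = x := by
      rw [Real.volume_Ioc, sub_zero, ENNReal.toReal_ofReal hx.1]
    rw [hvol] at hcs
    have hmono : ∫ t in Ioc (0:ℝ) x, u' t ^ 2 ≤ ∫ t in Ioc (0:ℝ) 1, u' t ^ 2 := by
      apply setIntegral_mono_set (hint.mono_set Ioc_subset_Icc_self)
        (Filter.Eventually.of_forall (fun t => sq_nonneg _))
        (HasSubset.Subset.eventuallyLE (Ioc_subset_Ioc le_rfl hx.2))
    calc u x ^ 2 = (∫ t in Ioc (0:ℝ) x, u' t) ^ 2 := by rw [hux]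
      _ ≤ x * ∫ t in Ioc (0:ℝ) x, u' t ^ 2 := hcs
      _ ≤ x * ∫ t in Ioc (0:ℝ) 1, u' t ^ 2 := mul_le_mul_of_nonneg_left hmono hx.1
      _ = x * I := by rw [hIeq]
  -- pointwise bound on Ioc
  have hklow := klow k k' M ⟨hM0, hM2⟩ hcont hder hineq
  have hpt : ∀ x ∈ Ioc (0:ℝ) 1, u x ^ 2 / k x ≤ (I / c) * x ^ (1 - M) := by
    intro x hx
    have hx0 : 0 < x := hx.1
    have hxM : (0:ℝ) < x ^ M := Real.rpow_pos_of_pos hx0 _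
    have hlow : c * x ^ M ≤ k x := hklow x hx
    have hcx : (0:ℝ) < c * x ^ M := by positivity
    have step1 : u x ^ 2 / k x ≤ u x ^ 2 / (c * x ^ M) :=
      div_le_div_of_nonneg_left (sq_nonneg _) hcx hlow
    have step2 : u x ^ 2 / (c * x ^ M) ≤ (x * I) / (c * x ^ M) := by
      exact div_le_div_of_nonneg_right (hptsq x ⟨hx0.le, hx.2⟩) hcx.le
    have step3 : (x * I) / (c * x ^ M) = (I / c) * x ^ (1 - M) := by
      rw [Real.rpow_sub hx0, Real.rpow_one]
      field_simp
    linarith [step1, step2, step3.ge]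
  -- integrability of the rpow bound on Ioc 0 1
  have hRint : IntegrableOn (fun x => (I / c) * x ^ (1 - M)) (Ioc (0:ℝ) 1) := by
    have : IntervalIntegrable (fun x : ℝ => x ^ (1 - M)) volume 0 1 :=
      intervalIntegral.intervalIntegrable_rpow' (by linarith)
    rw [intervalIntegrable_iff_integrableOn_Ioc_of_le zero_le_one] at this
    exact this.const_mul _
  -- continuity/measurability of LHS on Ioc
  have hucont : ContinuousOn u (Icc (0:ℝ) 1) :=
    fun x hx => (hu x hx).continuousAt.continuousWithinAt
  have hLcont : ContinuousOn (fun x => u x ^ 2 / k x) (Ioc (0:ℝ) 1) := by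
    apply ContinuousOn.div
    · exact ((hucont.mono Ioc_subset_Icc_self).pow 2)
    · exact hcont.mono Ioc_subset_Icc_self
    · exact fun x hx => (hpos x hx).ne'
  have hLint : IntegrableOn (fun x => u x ^ 2 / k x) (Ioc (0:ℝ) 1) := by
    refine hRint.mono' (hLcont.aestronglyMeasurable measurableSet_Ioc) ?_
    refine ae_restrict_of_forall_mem measurableSet_Ioc (fun x hx => ?_)
    have h1 : 0 ≤ u x ^ 2 / k x := div_nonneg (sq_nonneg _) (hpos x hx).le
    rw [Real.norm_eq_abs, abs_of_nonneg h1]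
    exact hpt x hx
  -- rpow integral value
  have hrpowval : ∫ x in (0:ℝ)..1, x ^ (1 - M) = 1 / (2 - M) := by
    rw [integral_rpow (Or.inl (by linarith))]
    rw [Real.one_rpow, Real.zero_rpow (by intro h; linarith : (1:ℝ) - M + 1 ≠ 0),
      show (1:ℝ) - M + 1 = 2 - M by ring]
    norm_num
  -- final chain
  calc (∫ x in (0:ℝ)..1, u x ^ 2 / k x)
      = ∫ x in Ioc (0:ℝ) 1, u x ^ 2 / k x := intervalIntegral.integral_of_le zero_le_one
    _ ≤ ∫ x in Ioc (0:ℝ) 1, (I / c) * x ^ (1 - M) :=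
        setIntegral_mono_on hLint hRint measurableSet_Ioc hpt
    _ = (I / c) * ∫ x in Ioc (0:ℝ) 1, x ^ (1 - M) := by rw [MeasureTheory.integral_const_mul]
    _ = (I / c) * ∫ x in (0:ℝ)..1, x ^ (1 - M) := by
        rw [intervalIntegral.integral_of_le zero_le_one]
    _ = (I / c) * (1 / (2 - M)) := by rw [hrpowval]
    _ = 1 / (c * (2 - M)) * I := by field_simp
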